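/- Let A be an exact category and D^b(A) = H^b(A)/N its bounded derived category, with canonical embedding can : A ⟶ D^b(A) sending X to the complex concentrated in degree 0. Then for every conflation ε : X ⟶ Y ⟶ Z of A there is a canonical distinguished triangle can(X) ⟶ can(Y) ⟶ can(Z) ⟶ can(X)[1] in D^b(A), where the connecting morphism ∂ε is the image in D^b(A) of the roof built from the mapping-cone quasi-isomorphism Cone(X ⟶ Y) ⟶ Z. -/

import Mathlib

open CategoryTheory CategoryTheory.Limits CategoryTheory.Pretriangulated

universe v u v' u'

/-- A Quillen exact structure on an additive category: a class of kernel–cokernel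
pairs (conflations), closed under isomorphism, such that the identity of a zero
object is a deflation, deflations are closed under composition, pullbacks of
deflations exist and are deflations, and pushouts of inflations exist and are
inflations. -/
structure ExactStructure (A : Type u) [Category.{v} A] [Preadditive A] where
  conflation : ∀ {X Y Z : A}, (X ⟶ Y) → (Y ⟶ Z) → Prop
  comp_zero : ∀ {X Y Z : A} (i : X ⟶ Y) (p : Y ⟶ Z), conflation i p → i ≫ p = 0
  isKernel : ∀ {X Y Z : A} (i : X ⟶ Y) (p : Y ⟶ Z), conflation i p →
    ∀ {W : A} (g : W ⟶ Y), g ≫ p = 0 → ∃! g' : W ⟶ X, g' ≫ i = g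
  isCokernel : ∀ {X Y Z : A} (i : X ⟶ Y) (p : Y ⟶ Z), conflation i p →
    ∀ {W : A} (g : Y ⟶ W), i ≫ g = 0 → ∃! g' : Z ⟶ W, p ≫ g' = g
  iso_closed : ∀ {X Y Z X' Y' Z' : A} (i : X ⟶ Y) (p : Y ⟶ Z)
    (i' : X' ⟶ Y') (p' : Y' ⟶ Z') (eX : X ≅ X') (eY : Y ≅ Y') (eZ : Z ≅ Z'),
    i ≫ eY.hom = eX.hom ≫ i' → p ≫ eZ.hom = eY.hom ≫ p' →
    conflation i p → conflation i' p'
  zero_deflation : ∀ Z : A, IsZero Z → ∃ (X : A) (i : X ⟶ Z), conflation i (𝟙 Z)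
  deflation_comp : ∀ {Y Z W : A} (p : Y ⟶ Z) (q : Z ⟶ W),
    (∃ (X : A) (i : X ⟶ Y), conflation i p) →
    (∃ (X : A) (i : X ⟶ Z), conflation i q) →
    ∃ (X : A) (i : X ⟶ Y), conflation i (p ≫ q)
  pullback_deflation : ∀ {Y Z Z' : A} (p : Y ⟶ Z) (f : Z' ⟶ Z),
    (∃ (X : A) (i : X ⟶ Y), conflation i p) →
    ∃ (Y' : A) (f' : Y' ⟶ Y) (p' : Y' ⟶ Z'), IsPullback f' p' p f ∧
      ∃ (X : A) (i : X ⟶ Y'), conflation i p'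
  pushout_inflation : ∀ {X Y X' : A} (i : X ⟶ Y) (f : X ⟶ X'),
    (∃ (Z : A) (p : Y ⟶ Z), conflation i p) →
    ∃ (Y' : A) (f' : Y ⟶ Y') (i' : X' ⟶ Y'), IsPushout i f f' i' ∧
      ∃ (Z : A) (p : Y' ⟶ Z), conflation i' p


variable {A : Type u} [Category.{v} A] [Preadditive A]

/-- A complex is bounded if its components vanish outside a finite range. -/
def IsBoundedComplex (N : CochainComplex A ℤ) : Prop :=
  ∃ a b : ℤ, ∀ p : ℤ, (p < a ∨ b < p) → IsZero (N.X p)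

/-- A complex `N` is strictly acyclic if there are conflations
`Z^p ⟶ N^p ⟶ Z^{p+1}` such that each differential `d^p` factors as the deflation
`N^p ⟶ Z^{p+1}` followed by the inflation `Z^{p+1} ⟶ N^{p+1}`. -/
def StrictlyAcyclic (E : ExactStructure A) (N : CochainComplex A ℤ) : Prop :=
  ∃ (Z : ℤ → A) (i : ∀ p : ℤ, Z p ⟶ N.X p) (q : ∀ p : ℤ, N.X p ⟶ Z (p + 1)),
    (∀ p : ℤ, E.conflation (i p) (q p)) ∧
    (∀ p : ℤ, N.d p (p + 1) = q p ≫ i (p + 1))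

set_option linter.unusedSectionVars false

open ZeroObject

section MyAux

variable {A : Type u} [Category.{v} A] [Preadditive A] [HasZeroObject A]

lemma ExactStructure.conf_zero_id (E : ExactStructure A) (W : A) :
    E.conflation (0 : (0 : A) ⟶ W) (𝟙 W) := by
  obtain ⟨X₀, i₀, h₀⟩ := E.zero_deflation 0 (isZero_zero A)
  obtain ⟨Y', f', p', hP, X', i', hconf⟩ :=
    E.pullback_deflation (𝟙 (0 : A)) (0 : W ⟶ 0) ⟨X₀, i₀, h₀⟩
  have hw : (0 : W ⟶ (0:A)) ≫ 𝟙 (0:A) = 𝟙 W ≫ (0 : W ⟶ 0) := by simp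
  have h1 : hP.lift 0 (𝟙 W) hw ≫ p' = 𝟙 W := hP.lift_snd _ _ _
  have h2 : p' ≫ hP.lift 0 (𝟙 W) hw = 𝟙 Y' := by
    apply hP.hom_ext
    · exact (isZero_zero A).eq_of_tgt _ _
    · rw [Category.assoc, h1, Category.comp_id, Category.id_comp]
  haveI hiso : IsIso p' := ⟨_, h2, h1⟩
  have hi'0 : i' = 0 := by
    rw [← cancel_mono p', E.comp_zero i' p' hconf, zero_comp]
  have hX' : IsZero X' := by
    rw [IsZero.iff_id_eq_zero]
    obtain ⟨g', hg', hu⟩ := E.isKernel i' p' hconf (0 : X' ⟶ Y') (by simp)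
    exact (hu (𝟙 X') (by simp [hi'0])).trans (hu 0 (by simp)).symm
  exact E.iso_closed i' p' _ _ hX'.isoZero (asIso p') (Iso.refl W)
    (by simp [hi'0]) (by simp) hconf

lemma ExactStructure.conf_id_zero (E : ExactStructure A) (W : A) :
    E.conflation (𝟙 W) (0 : W ⟶ (0 : A)) := by
  obtain ⟨Y', f', i', hP, Z'', p', hconf⟩ :=
    E.pushout_inflation (0 : (0:A) ⟶ (0:A)) (0 : (0:A) ⟶ W)
      ⟨(0:A), 𝟙 (0:A), E.conf_zero_id (0:A)⟩
  have hw : (0 : (0:A) ⟶ (0:A)) ≫ (0 : (0:A) ⟶ W) = (0 : (0:A) ⟶ W) ≫ 𝟙 W := by simp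
  have h1 : i' ≫ hP.desc 0 (𝟙 W) hw = 𝟙 W := hP.inr_desc _ _ _
  have h2 : hP.desc 0 (𝟙 W) hw ≫ i' = 𝟙 Y' := by
    apply hP.hom_ext
    · exact (isZero_zero A).eq_of_src _ _
    · rw [← Category.assoc, h1, Category.comp_id, Category.id_comp]
  haveI hiso : IsIso i' := ⟨_, h1, h2⟩
  have hp'0 : p' = 0 := by
    rw [← cancel_epi i', E.comp_zero i' p' hconf, Limits.comp_zero]
  have hZ'' : IsZero Z'' := by
    rw [IsZero.iff_id_eq_zero]
    obtain ⟨g', hg', hu⟩ := E.isCokernel i' p' hconf (0 : Y' ⟶ Z'') (by simp)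
    exact (hu (𝟙 Z'') (by simp [hp'0])).trans (hu 0 (by simp)).symm
  exact E.iso_closed i' p' _ _ (Iso.refl W) ((asIso i').symm) hZ''.isoZero
    (by simp) (by simp [hp'0]) hconf

noncomputable section

open ZeroObject

/-- Candidate cycle objects for the three-term complex `N`. -/
def Zc (N : CochainComplex A ℤ) : ℤ → A := fun n =>
  if n = -1 then N.X (-2) else if n = 0 then N.X 0 else 0

/-- The inflations for the strict acyclicity of `N`. -/
def ifn (N : CochainComplex A ℤ) : ∀ n : ℤ, Zc N n ⟶ N.X n := fun n =>
  if h1 : n = -1 then eqToHom (by rw [h1]; simp [Zc]) ≫ N.d (-2) n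
  else if h0 : n = 0 then eqToHom (by rw [h0]; simp [Zc]) else 0

/-- The deflations for the strict acyclicity of `N`. -/
def qfn (N : CochainComplex A ℤ) : ∀ n : ℤ, N.X n ⟶ Zc N (n + 1) := fun n =>
  if h2 : n = -2 then eqToHom (by rw [h2]; norm_num [Zc])
  else if h1 : n = -1 then N.d n 0 ≫ eqToHom (by rw [h1]; norm_num [Zc])
  else 0

lemma isZero_Zc (N : CochainComplex A ℤ) (m : ℤ) (hm1 : m ≠ -1) (hm0 : m ≠ 0) :
    IsZero (Zc N m) := by
  simp only [Zc, if_neg hm1, if_neg hm0]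
  exact isZero_zero A

lemma d_eq_qfn_ifn (N : CochainComplex A ℤ)
    (hz : ∀ n : ℤ, n < -2 ∨ 0 < n → IsZero (N.X n)) (n : ℤ) :
    N.d n (n + 1) = qfn N n ≫ ifn N (n + 1) := by
  by_cases h2 : n = -2
  · subst h2
    rw [qfn, ifn, dif_pos rfl, dif_pos (by norm_num)]
    simp
  · by_cases h1 : n = -1
    · subst h1
      rw [qfn, ifn, dif_neg (by norm_num), dif_pos rfl, dif_neg (by norm_num),
        dif_pos (by norm_num)]
      simp
    · by_cases h0 : n = 0
      · subst h0
        rw [qfn, dif_neg (by norm_num), dif_neg (by norm_num)]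
        exact ((hz 1 (by omega)).eq_of_tgt _ _).trans (Limits.zero_comp).symm
      · rw [qfn, dif_neg h2, dif_neg h1]
        rcases lt_or_ge n (-2 : ℤ) with h | h
        · exact ((hz n (by omega)).eq_of_src _ _).trans (Limits.zero_comp).symm
        · exact ((hz (n+1) (by omega)).eq_of_tgt _ _).trans (Limits.zero_comp).symm

lemma conflation_ifn_qfn (E : ExactStructure A) (N : CochainComplex A ℤ)
    {X Y Z : A} (i : X ⟶ Y) (p : Y ⟶ Z) (hc : E.conflation i p)
    (eM2 : N.X (-2) ≅ X) (eM1 : N.X (-1) ≅ Y) (e00 : N.X 0 ≅ Z)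
    (hA : eM2.inv ≫ N.d (-2) (-1) = -(i ≫ eM1.inv))
    (hB : eM1.inv ≫ N.d (-1) 0 ≫ e00.hom = p)
    (hz : ∀ n : ℤ, n < -2 ∨ 0 < n → IsZero (N.X n)) (n : ℤ) :
    E.conflation (ifn N n) (qfn N n) := by
  by_cases h1 : n = -1
  · subst h1
    rw [ifn, qfn, dif_pos rfl, dif_neg (by norm_num), dif_pos rfl]
    refine E.iso_closed i p _ _
      (⟨-𝟙 X, -𝟙 X, by simp, by simp⟩ ≪≫ eM2.symm ≪≫
        eqToIso (by simp [Zc] : N.X (-2) = Zc N (-1)).symm)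
      eM1.symm (e00.symm ≪≫ eqToIso (by norm_num [Zc] : N.X 0 = Zc N (-1 + 1))) ?_ ?_ hc
    · simp only [Iso.trans_hom, Iso.symm_hom, eqToIso.hom, Category.assoc,
        eqToHom_trans_assoc, eqToHom_refl, Category.id_comp]
      erw [eqToHom_trans_assoc]
      erw [eqToHom_refl, Category.id_comp, hA]
      simp
      simp [Zc]
    · simp only [Iso.trans_hom, Iso.symm_hom, eqToIso.hom, Category.assoc]
      rw [← hB]
      simp
  · by_cases h0 : n = 0
    · subst h0
      rw [ifn, qfn, dif_neg (by norm_num), dif_pos rfl, dif_neg (by norm_num),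
        dif_neg (by norm_num)]
      refine E.iso_closed (𝟙 (N.X 0)) (0 : N.X 0 ⟶ (0:A)) _ _
        (eqToIso (by simp [Zc] : Zc N 0 = N.X 0).symm) (Iso.refl _)
        ((isZero_Zc N (0+1) (by norm_num) (by norm_num)).isoZero.symm) ?_ ?_
        (E.conf_id_zero _)
      · simp [eqToHom_trans]
      · simp
    · by_cases h2 : n = -2
      · subst h2
        rw [ifn, qfn, dif_neg (by norm_num), dif_neg (by norm_num), dif_pos rfl]
        refine E.iso_closed (0 : (0:A) ⟶ N.X (-2)) (𝟙 (N.X (-2))) _ _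
          ((isZero_Zc N (-2) (by norm_num) (by norm_num)).isoZero.symm) (Iso.refl _)
          (eqToIso (by norm_num [Zc] : N.X (-2) = Zc N (-2 + 1))) ?_ ?_
          (E.conf_zero_id _)
        · simp
        · simp
      · rw [ifn, dif_neg h1, dif_neg h0, qfn, dif_neg h2, dif_neg h1]
        exact E.iso_closed (0 : (0:A) ⟶ (0:A)) (𝟙 (0:A)) _ _
          ((isZero_Zc N n h1 h0).isoZero.symm)
          ((hz n (by omega)).isoZero.symm)
          ((isZero_Zc N (n+1) (by omega) (by omega)).isoZero.symm)
          ((isZero_zero A).eq_of_src _ _) ((isZero_zero A).eq_of_src _ _)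
          (E.conf_zero_id (0:A))

end

end MyAux

namespace Stmt17Aux

open CochainComplex HomologicalComplex CochainComplex.HomComplex

variable {A : Type u} [Category.{v} A] [Preadditive A] [HasZeroObject A] [HasBinaryBiproducts A]

lemma isZero_mappingCone_X {F G : CochainComplex A ℤ} (φ : F ⟶ G) (n : ℤ)
    (h1 : IsZero (F.X (n+1))) (h2 : IsZero (G.X n)) :
    IsZero ((mappingCone φ).X n) := by
  rw [IsZero.iff_id_eq_zero, ← mappingCone.id_X φ n (n+1) rfl,
    h1.eq_of_tgt ((mappingCone.fst φ).1.v n (n+1) rfl) 0,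
    h2.eq_of_tgt ((mappingCone.snd φ).v n n (add_zero n)) 0]
  simp

variable {X Y Z : A} (i : X ⟶ Y) (p : Y ⟶ Z)

/-- The single complex functor in degree 0. -/
noncomputable abbrev SS : A ⥤ CochainComplex A ℤ :=
  HomologicalComplex.single A (ComplexShape.up ℤ) 0

lemma hSX (W : A) (n : ℤ) (hn : n ≠ 0) : IsZero (((SS (A := A)).obj W).X n) :=
  isZero_single_obj_X (ComplexShape.up ℤ) 0 W n hn

variable (hip : i ≫ p = 0)

/-- The map from the cone of `single.map i` to `single Z`. -/
noncomputable def φS : mappingCone ((SS (A := A)).map i) ⟶ (SS (A := A)).obj Z :=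
  mappingCone.desc _ 0 ((SS (A := A)).map p)
    (by rw [δ_zero, ← Functor.map_comp, hip, Functor.map_zero, Cochain.ofHom_zero])

lemma inr_φS : mappingCone.inr ((SS (A := A)).map i) ≫ φS i p hip = (SS (A := A)).map p :=
  mappingCone.inr_desc _ _ _ _

/-- The total complex `X → Y → Z` realized as a double mapping cone. -/
noncomputable abbrev NS : CochainComplex A ℤ := mappingCone (φS i p hip)

lemma isZero_cone1 (n : ℤ) (h1 : n ≠ -1) (h2 : n ≠ 0) :
    IsZero ((mappingCone ((SS (A := A)).map i)).X n) :=
  isZero_mappingCone_X _ n (hSX X _ (by omega)) (hSX Y _ h2)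

lemma isZero_NS (n : ℤ) (hn : n < -2 ∨ 0 < n) : IsZero ((NS i p hip).X n) :=
  isZero_mappingCone_X _ n (isZero_cone1 i (n+1) (by omega) (by omega)) (hSX Z n (by omega))

/-- Degree 0 of the cone of `single.map i` is `Y`. -/
noncomputable def e0 : (mappingCone ((SS (A := A)).map i)).X 0 ≅ Y where
  hom := (mappingCone.snd _).v 0 0 (add_zero 0) ≫
    (singleObjXSelf (ComplexShape.up ℤ) (0 : ℤ) Y).hom
  inv := (singleObjXSelf (ComplexShape.up ℤ) (0 : ℤ) Y).inv ≫ (mappingCone.inr _).f 0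
  hom_inv_id := by
    have h := mappingCone.id_X ((SS (A := A)).map i) 0 1 rfl
    rw [(hSX X 1 one_ne_zero).eq_of_tgt ((mappingCone.fst _).1.v 0 1 rfl) 0] at h
    simp only [Category.assoc, Iso.hom_inv_id_assoc]
    simpa using h
  inv_hom_id := by simp

/-- Degree -1 of the cone of `single.map i` is `X`. -/
noncomputable def e1 : (mappingCone ((SS (A := A)).map i)).X (-1) ≅ X where
  hom := (mappingCone.fst _).1.v (-1) 0 (by omega) ≫
    (singleObjXSelf (ComplexShape.up ℤ) (0 : ℤ) X).hom
  inv := (singleObjXSelf (ComplexShape.up ℤ) (0 : ℤ) X).inv ≫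
    (mappingCone.inl _).v 0 (-1) (by omega)
  hom_inv_id := by
    have h := mappingCone.id_X ((SS (A := A)).map i) (-1) 0 (by omega)
    rw [(hSX Y (-1) (by omega)).eq_of_tgt ((mappingCone.snd _).v (-1) (-1) (add_zero _)) 0] at h
    simp only [Category.assoc, Iso.hom_inv_id_assoc]
    simpa using h
  inv_hom_id := by simp

/-- Degree 0 of `NS` is `Z`. -/
noncomputable def E0 : (NS i p hip).X 0 ≅ Z where
  hom := (mappingCone.snd _).v 0 0 (add_zero 0) ≫
    (singleObjXSelf (ComplexShape.up ℤ) (0 : ℤ) Z).hom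
  inv := (singleObjXSelf (ComplexShape.up ℤ) (0 : ℤ) Z).inv ≫ (mappingCone.inr _).f 0
  hom_inv_id := by
    have h := mappingCone.id_X (φS i p hip) 0 1 rfl
    rw [(isZero_cone1 i 1 (by omega) (by omega)).eq_of_tgt
      ((mappingCone.fst _).1.v 0 1 rfl) 0] at h
    simp only [Category.assoc, Iso.hom_inv_id_assoc]
    simpa using h
  inv_hom_id := by simp

/-- Degree -1 of `NS` is `Y`. -/
noncomputable def E1 : (NS i p hip).X (-1) ≅ Y where
  hom := (mappingCone.fst _).1.v (-1) 0 (by omega) ≫ (e0 i).hom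
  inv := (e0 i).inv ≫ (mappingCone.inl _).v 0 (-1) (by omega)
  hom_inv_id := by
    have h := mappingCone.id_X (φS i p hip) (-1) 0 (by omega)
    rw [(hSX Z (-1) (by omega)).eq_of_tgt ((mappingCone.snd _).v (-1) (-1) (add_zero _)) 0] at h
    simp only [Category.assoc, Iso.hom_inv_id_assoc]
    simpa using h
  inv_hom_id := by simp

/-- Degree -2 of `NS` is `X`. -/
noncomputable def E2 : (NS i p hip).X (-2) ≅ X where
  hom := (mappingCone.fst _).1.v (-2) (-1) (by omega) ≫ (e1 i).hom
  inv := (e1 i).inv ≫ (mappingCone.inl _).v (-1) (-2) (by omega)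
  hom_inv_id := by
    have h := mappingCone.id_X (φS i p hip) (-2) (-1) (by omega)
    rw [(hSX Z (-2) (by omega)).eq_of_tgt ((mappingCone.snd _).v (-2) (-2) (add_zero _)) 0] at h
    simp only [Category.assoc, Iso.hom_inv_id_assoc]
    simpa using h
  inv_hom_id := by simp

lemma keyA : (E2 i p hip).inv ≫ (NS i p hip).d (-2) (-1) = -(i ≫ (E1 i p hip).inv) := by
  have h1 := mappingCone.inl_v_d (φS i p hip) (-1) (-2) 0 (by omega) (by omega)
  rw [(hSX Z (-1) (by omega)).eq_of_tgt ((φS i p hip).f (-1)) 0, zero_comp, zero_sub] at h1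
  have h2 := mappingCone.inl_v_d ((SS (A := A)).map i) 0 (-1) 1 (by omega) (by omega)
  rw [single_obj_d, zero_comp, sub_zero] at h2
  dsimp only [E2, E1, e1, e0]
  rw [Category.assoc, h1, Preadditive.comp_neg]
  congr 1
  rw [← Category.assoc, Category.assoc _ _ ((mappingCone ((SS (A := A)).map i)).d (-1) 0),
    h2, single_map_f_self]
  simp

lemma keyB : (E1 i p hip).inv ≫ (NS i p hip).d (-1) 0 ≫ (E0 i p hip).hom = p := by
  have h1 := mappingCone.inl_v_d (φS i p hip) 0 (-1) 1 (by omega) (by omega)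
  rw [(isZero_cone1 i 1 (by omega) (by omega)).eq_of_tgt
      ((mappingCone ((SS (A := A)).map i)).d 0 1) 0, zero_comp, sub_zero] at h1
  dsimp only [E1, E0, e0]
  rw [Category.assoc, ← Category.assoc ((mappingCone.inl _).v 0 (-1) _), h1]
  simp only [Category.assoc, mappingCone.inr_f_snd_v_assoc]
  have h2 : (mappingCone.inr ((SS (A := A)).map i)).f 0 ≫ (φS i p hip).f 0 =
      ((SS (A := A)).map p).f 0 := by
    rw [← HomologicalComplex.comp_f, inr_φS]
  rw [← Category.assoc ((mappingCone.inr _).f 0), h2, single_map_f_self]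
  simp

end Stmt17Aux

/-- Let `A` be an exact category and let `L` be a triangulated functor from the
homotopy category of complexes over `A` to a triangulated category `D` which kills
the bounded acyclic complexes (so that `L` factors the localization defining the
derived category `D^b(A)`). Writing `can : A ⥤ D` for the composite of the
degree-`0` embedding with `L`, every conflation `X ⟶ Y ⟶ Z` of `A` gives rise to
a distinguished triangle `can X ⟶ can Y ⟶ can Z ⟶ (can X)⟦1⟧` in `D`. -/
theorem stmt_17 [HasZeroObject A] [HasBinaryBiproducts A] (E : ExactStructure A)
    {D : Type u'} [Category.{v'} D] [HasZeroObject D] [Preadditive D] [HasShift D ℤ]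
    [∀ n : ℤ, (CategoryTheory.shiftFunctor D n).Additive] [Pretriangulated D]
    (L : HomotopyCategory A (ComplexShape.up ℤ) ⥤ D) [L.CommShift ℤ]
    [L.IsTriangulated]
    (hL : ∀ N : CochainComplex A ℤ, IsBoundedComplex N → StrictlyAcyclic E N →
      IsZero (L.obj ((HomotopyCategory.quotient A (ComplexShape.up ℤ)).obj N)))
    (can : A ⥤ D)
    (hcan : can = HomologicalComplex.single A (ComplexShape.up ℤ) 0 ⋙
      HomotopyCategory.quotient A (ComplexShape.up ℤ) ⋙ L)
    {X Y Z : A} (i : X ⟶ Y) (p : Y ⟶ Z) (hc : E.conflation i p) :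
    ∃ δ : can.obj Z ⟶ (can.obj X)⟦(1 : ℤ)⟧,
      Triangle.mk (can.map i) (can.map p) δ ∈ distTriang D := by
  have hip0 : i ≫ p = 0 := E.comp_zero i p hc
  subst hcan
  have hzero : IsZero (L.obj ((HomotopyCategory.quotient A (ComplexShape.up ℤ)).obj
      (Stmt17Aux.NS i p hip0))) := by
    refine hL _ ⟨-2, 0, fun n hn => Stmt17Aux.isZero_NS i p hip0 n hn⟩
      ⟨Zc _, ifn _, qfn _,
        conflation_ifn_qfn E _ i p hc (Stmt17Aux.E2 i p hip0) (Stmt17Aux.E1 i p hip0)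
          (Stmt17Aux.E0 i p hip0) (Stmt17Aux.keyA i p hip0) (Stmt17Aux.keyB i p hip0)
          (Stmt17Aux.isZero_NS i p hip0),
        d_eq_qfn_ifn _ (Stmt17Aux.isZero_NS i p hip0)⟩
  have hdist' := L.map_distinguished _
    (HomotopyCategory.mappingCone_triangleh_distinguished (Stmt17Aux.φS i p hip0))
  have hiso : IsIso (L.map ((HomotopyCategory.quotient A (ComplexShape.up ℤ)).map
      (Stmt17Aux.φS i p hip0))) := (Triangle.isZero₃_iff_isIso₁ _ hdist').1 hzero
  have hdistf := L.map_distinguished _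
    (HomotopyCategory.mappingCone_triangleh_distinguished
      ((HomologicalComplex.single A (ComplexShape.up ℤ) 0).map i))
  refine ⟨inv (L.map ((HomotopyCategory.quotient A (ComplexShape.up ℤ)).map
      (Stmt17Aux.φS i p hip0))) ≫
      (L.mapTriangle.obj (CochainComplex.mappingCone.triangleh
        ((HomologicalComplex.single A (ComplexShape.up ℤ) 0).map i))).mor₃, ?_⟩
  refine Pretriangulated.isomorphic_distinguished _ hdistf _ ?_
  refine Triangle.isoMk _ _ (Iso.refl _) (Iso.refl _)
    (asIso (L.map ((HomotopyCategory.quotient A (ComplexShape.up ℤ)).map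
      (Stmt17Aux.φS i p hip0)))).symm ?_ ?_ ?_
  · exact (Category.comp_id _).trans (Category.id_comp _).symm
  · have h : L.map ((HomotopyCategory.quotient A (ComplexShape.up ℤ)).map
        (CochainComplex.mappingCone.inr ((HomologicalComplex.single A (ComplexShape.up ℤ) 0).map i))) ≫
        L.map ((HomotopyCategory.quotient A (ComplexShape.up ℤ)).map (Stmt17Aux.φS i p hip0)) =
        L.map ((HomotopyCategory.quotient A (ComplexShape.up ℤ)).map
          ((HomologicalComplex.single A (ComplexShape.up ℤ) 0).map p)) := by
      rw [← L.map_comp, ← Functor.map_comp, Stmt17Aux.inr_φS]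
    exact (IsIso.comp_inv_eq (L.map ((HomotopyCategory.quotient A (ComplexShape.up ℤ)).map
      (Stmt17Aux.φS i p hip0)))).2 (h.symm.trans (congrArg (· ≫ _) (Category.id_comp _).symm))
  · exact ((shiftFunctor D (1:ℤ)).map_id _ ▸ Category.comp_id _)
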